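/- Define T : F_r → ℓ²(F_r) by sending the identity to 0 and a reduced block form g = a₁^{k₁} a₂^{k₂} ⋯ a_n^{k_n} to T(g) = k₁ δ_{a₁} + k₂ δ_{a₁^{k₁} a₂} + ⋯ + k_n δ_{a₁^{k₁} a₂^{k₂} ⋯ a_{n−1}^{k_{n−1}} a_n}, where δ_x denotes the standard basis vector of ℓ²(F_r) at x ∈ F_r. Then for all f, g ∈ F_r, ‖T(g) − T(f)‖² = ‖f⁻¹ g‖₂². -/

import Mathlib

open ComplexOrder

/-- Sum of squared block lengths of a reduced word, given the generator of the
current block and its current length. Blocks are maximal runs of the same generator. -/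
def blockSqSumAux {ι : Type*} [DecidableEq ι] (a : ι) (n : ℕ) :
    List (ι × Bool) → ℕ
  | [] => n ^ 2
  | (b, _) :: l => if b = a then blockSqSumAux a (n + 1) l else n ^ 2 + blockSqSumAux b 1 l

/-- The squared ℓ² length of an element of a free group: for a reduced block form
`g = a₁^{k₁} ⋯ a_n^{k_n}` it equals `∑ i, k_i²`. -/
def l2sq {ι : Type*} [DecidableEq ι] (g : FreeGroup ι) : ℕ :=
  match FreeGroup.toWord g with
  | [] => 0
  | (a, _) :: l => blockSqSumAux a 1 l
/-- Auxiliary construction for `T`: given the product `pre` of the blocks already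
processed, the generator `a` and signed exponent `k` of the current block, and the rest
of the reduced word, build the corresponding element of `ℓ²(F_r)`. -/
noncomputable def TAux {ι : Type*} [DecidableEq ι] (pre : FreeGroup ι) (a : ι) (k : ℤ) :
    List (ι × Bool) → lp (fun _ : FreeGroup ι => ℝ) 2
  | [] => (k : ℝ) • lp.single 2 (pre * FreeGroup.of a) 1
  | (b, s) :: l =>
    if b = a then TAux pre a (k + (if s then 1 else -1)) l
    else (k : ℝ) • lp.single 2 (pre * FreeGroup.of a) 1
        + TAux (pre * FreeGroup.of a ^ k) b (if s then 1 else -1) l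

/-- The map `T : F_r → ℓ²(F_r)` sending the identity to `0` and a reduced block form
`g = a₁^{k₁} a₂^{k₂} ⋯ a_n^{k_n}` to
`k₁ δ_{a₁} + k₂ δ_{a₁^{k₁} a₂} + ⋯ + k_n δ_{a₁^{k₁} ⋯ a_{n−1}^{k_{n−1}} a_n}`,
where `δ_x = lp.single 2 x 1` is the standard basis vector at `x`. -/
noncomputable def T {ι : Type*} [DecidableEq ι] (g : FreeGroup ι) :
    lp (fun _ : FreeGroup ι => ℝ) 2 :=
  match FreeGroup.toWord g with
  | [] => 0
  | (a, s) :: l => TAux 1 a (if s then 1 else -1) l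

namespace NTSq
open FreeGroup List
open scoped ENNReal NNReal

variable {ι : Type*} [DecidableEq ι]

def sgn (s : Bool) : ℤ := if s then 1 else -1

def blocksAux (a : ι) (k : ℤ) : List (ι × Bool) → List (ι × ℤ)
  | [] => [(a, k)]
  | (b, s) :: l => if b = a then blocksAux a (k + sgn s) l else (a, k) :: blocksAux b (sgn s) l

def blocks : List (ι × Bool) → List (ι × ℤ)
  | [] => []
  | (a, s) :: l => blocksAux a (sgn s) l

def letters (a : ι) (k : ℤ) : List (ι × Bool) := List.replicate k.natAbs (a, decide (0 < k))

def wordOf : List (ι × ℤ) → List (ι × Bool)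
  | [] => []
  | (a, k) :: B => letters a k ++ wordOf B

def prodB : List (ι × ℤ) → FreeGroup ι
  | [] => 1
  | (a, k) :: B => FreeGroup.of a ^ k * prodB B

def Valid (B : List (ι × ℤ)) : Prop :=
  (∀ p ∈ B, p.2 ≠ 0) ∧ B.Chain' (fun p q => p.1 ≠ q.1)

def sumSq (B : List (ι × ℤ)) : ℕ := (B.map (fun p => p.2.natAbs ^ 2)).sum

def revNeg (B : List (ι × ℤ)) : List (ι × ℤ) := (B.map (fun p => (p.1, -p.2))).reverse

def Red2 : (ι × Bool) → (ι × Bool) → Prop := fun x y => ¬(x.1 = y.1 ∧ x.2 = !y.2)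

lemma mk_replicate_true (a : ι) (n : ℕ) :
    FreeGroup.mk (List.replicate n (a, true)) = FreeGroup.of a ^ n := by
  rw [← FreeGroup.toWord_of_pow, FreeGroup.mk_toWord]

lemma invRev_replicate (a : ι) (s : Bool) (n : ℕ) :
    FreeGroup.invRev (List.replicate n (a, s)) = List.replicate n (a, !s) := by
  simp [FreeGroup.invRev, List.map_replicate, List.reverse_replicate]

lemma mk_letters (a : ι) (k : ℤ) : FreeGroup.mk (letters a k) = FreeGroup.of a ^ k := by
  unfold letters
  rcases lt_trichotomy 0 k with h | h | h
  · have hd : decide (0 < k) = true := decide_eq_true h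
    rw [hd, mk_replicate_true, ← zpow_natCast]
    congr 1
    omega
  · rw [← h]
    simp [FreeGroup.one_eq_mk]
  · have hd : decide (0 < k) = false := decide_eq_false (by omega)
    rw [hd]
    have h2 : FreeGroup.mk (List.replicate k.natAbs ((a,false) : ι × Bool)) =
        (FreeGroup.mk (List.replicate k.natAbs ((a,true) : ι × Bool)))⁻¹ := by
      rw [FreeGroup.inv_mk, invRev_replicate]
      simp
    rw [h2, mk_replicate_true, ← zpow_natCast, ← zpow_neg]
    congr 1
    omega

lemma prodB_append (X Y : List (ι × ℤ)) : prodB (X ++ Y) = prodB X * prodB Y := by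
  induction X with
  | nil => simp [prodB]
  | cons p X ih => obtain ⟨a, k⟩ := p; simp [prodB, ih, mul_assoc]

lemma prodB_wordOf (B : List (ι × ℤ)) : prodB B = FreeGroup.mk (wordOf B) := by
  induction B with
  | nil => simp [prodB, wordOf, FreeGroup.one_eq_mk]
  | cons p B ih =>
    obtain ⟨a, k⟩ := p
    rw [prodB, wordOf, ← FreeGroup.mul_mk, mk_letters, ih]

lemma prodB_revNeg (B : List (ι × ℤ)) : prodB (revNeg B) = (prodB B)⁻¹ := by
  induction B with
  | nil => simp [prodB, revNeg]
  | cons p B ih =>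
    obtain ⟨a, k⟩ := p
    have : revNeg ((a,k)::B) = revNeg B ++ [(a,-k)] := by simp [revNeg]
    rw [this, prodB_append, ih, prodB, prodB, prodB]
    group

lemma sumSq_append (X Y : List (ι × ℤ)) : sumSq (X ++ Y) = sumSq X + sumSq Y := by
  simp [sumSq]

lemma sumSq_revNeg (B : List (ι × ℤ)) : sumSq (revNeg B) = sumSq B := by
  unfold sumSq revNeg
  rw [List.map_reverse, List.sum_reverse, List.map_map]
  congr 1
  apply List.map_congr_left
  intro p _
  simp

lemma prodB_blocksAux (l : List (ι × Bool)) : ∀ (a : ι) (k : ℤ),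
    prodB (blocksAux a k l) = FreeGroup.of a ^ k * FreeGroup.mk l := by
  induction l with
  | nil => intro a k; simp [blocksAux, prodB, FreeGroup.one_eq_mk]
  | cons x l ih =>
    obtain ⟨b, s⟩ := x
    intro a k
    have hmk : FreeGroup.mk ((b,s) :: l) = FreeGroup.of b ^ (sgn s) * FreeGroup.mk l := by
      have : ((b,s) :: l) = [(b,s)] ++ l := rfl
      rw [this, ← FreeGroup.mul_mk]
      congr 1
      cases s
      · show FreeGroup.mk [(b, false)] = _
        have : [((b, false) : ι × Bool)] = FreeGroup.invRev [(b, true)] := by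
          simp [FreeGroup.invRev]
        rw [this, ← FreeGroup.inv_mk]
        show (FreeGroup.of b)⁻¹ = _
        simp [sgn]
      · show FreeGroup.mk [(b, true)] = _
        show FreeGroup.of b = _
        simp [sgn]
    by_cases hba : b = a
    · subst hba
      rw [blocksAux, if_pos rfl, ih, hmk]
      rw [zpow_add, mul_assoc]
    · rw [blocksAux, if_neg hba, prodB, ih, hmk]

lemma prodB_blocks (w : List (ι × Bool)) : prodB (blocks w) = FreeGroup.mk w := by
  cases w with
  | nil => simp [blocks, prodB, FreeGroup.one_eq_mk]
  | cons x l =>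
    obtain ⟨a, s⟩ := x
    rw [blocks, prodB_blocksAux]
    have : ((a,s) :: l) = [(a,s)] ++ l := rfl
    rw [this, ← FreeGroup.mul_mk]
    congr 1
    cases s
    · have : [((a, false) : ι × Bool)] = FreeGroup.invRev [(a, true)] := by
        simp [FreeGroup.invRev]
      rw [this, ← FreeGroup.inv_mk]
      show _ = (FreeGroup.of a)⁻¹
      simp [sgn]
    · show _ = FreeGroup.of a
      simp [sgn]

lemma reduce_eq_self {w : List (ι × Bool)} (h : w.Chain' Red2) : FreeGroup.reduce w = w := by
  induction w with
  | nil => rfl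
  | cons x l ih =>
    have hl : l.Chain' Red2 := h.tail
    rw [FreeGroup.reduce.cons, ih hl]
    cases l with
    | nil => rfl
    | cons y t =>
      have hxy : Red2 x y := (List.isChain_cons_cons.mp h).1
      simp only [Red2] at hxy
      simp [if_neg hxy]

lemma chain'_of_reduce {w : List (ι × Bool)} (h : FreeGroup.reduce w = w) : w.Chain' Red2 := by
  induction w with
  | nil => exact List.isChain_nil
  | cons x l ih =>
    rw [FreeGroup.reduce.cons] at h
    cases hr : FreeGroup.reduce l with
    | nil =>
      rw [hr] at h
      replace h : [x] = x :: l := h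
      have : l = [] := by injection h with h1 h2; exact h2.symm
      subst this
      exact List.isChain_singleton _
    | cons y t =>
      rw [hr] at h
      replace h : (if x.1 = y.1 ∧ x.2 = !y.2 then t else x :: y :: t) = x :: l := h
      by_cases hc : x.1 = y.1 ∧ x.2 = !y.2
      · rw [if_pos hc] at h
        exfalso
        have hlen : (FreeGroup.reduce l).length ≤ l.length :=
          FreeGroup.Red.length_le (FreeGroup.reduce.red)
        rw [hr] at hlen
        have := congrArg List.length h
        simp at this hlen
        omega
      · rw [if_neg hc] at h
        have h2 : l = y :: t := by
          injection h with h1 h2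
          exact h2.symm
        have hl : FreeGroup.reduce l = l := by rw [hr, h2]
        rw [h2]
        exact List.isChain_cons_cons.mpr ⟨hc, h2 ▸ ih hl⟩

lemma chain'_toWord (g : FreeGroup ι) : (FreeGroup.toWord g).Chain' Red2 :=
  chain'_of_reduce (FreeGroup.reduce_toWord g)

lemma chain'_letters (a : ι) (k : ℤ) : (letters a k).Chain' Red2 := by
  unfold letters
  apply List.isChain_replicate_of_rel
  simp [Red2]

lemma letters_cons {a : ι} {k : ℤ} (hk : k ≠ 0) :
    letters a k = (a, decide (0 < k)) :: List.replicate (k.natAbs - 1) (a, decide (0 < k)) := by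
  unfold letters
  cases hn : k.natAbs with
  | zero => exact absurd (Int.natAbs_eq_zero.mp hn) hk
  | succ m => rw [List.replicate_succ]; rfl

lemma head?_fst_wordOf {B : List (ι × ℤ)} (hB : Valid B) :
    ((wordOf B).head?).map Prod.fst = (B.head?).map Prod.fst := by
  cases B with
  | nil => rfl
  | cons p B =>
    obtain ⟨a, k⟩ := p
    have hk : k ≠ 0 := hB.1 (a,k) (by simp)
    rw [wordOf, letters_cons hk]
    rfl

lemma chain'_wordOf {B : List (ι × ℤ)} (hB : Valid B) : (wordOf B).Chain' Red2 := by
  induction B with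
  | nil => exact List.isChain_nil
  | cons p B ih =>
    obtain ⟨a, k⟩ := p
    have hk : k ≠ 0 := hB.1 (a,k) (by simp)
    have hBt : Valid B := ⟨fun q hq => hB.1 q (by simp [hq]), hB.2.tail⟩
    rw [wordOf]
    unfold List.Chain'; rw [List.isChain_append]
    refine ⟨chain'_letters a k, ih hBt, ?_⟩
    intro x hx y hy
    have hxa : x.1 = a := by
      have : x ∈ letters a k := List.mem_of_mem_getLast? hx
      unfold letters at this
      rw [List.eq_of_mem_replicate this]
    have hyB : (B.head?).map Prod.fst = some y.1 := by
      have h1 := head?_fst_wordOf hBt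
      rw [← h1]
      cases hh : (wordOf B).head? with
      | none => rw [hh] at hy; simp at hy
      | some z => rw [hh] at hy; simp at hy; subst hy; rfl
    obtain ⟨q, B', rfl⟩ : ∃ q B', B = q :: B' := by
      cases B with
      | nil => simp at hyB
      | cons q B' => exact ⟨q, B', rfl⟩
    have hy1 : q.1 = y.1 := by simpa using hyB
    have hac : a ≠ q.1 := (List.isChain_cons_cons.mp hB.2).1
    simp only [Red2]
    rintro ⟨h1, -⟩
    exact hac (by rw [← hy1] at h1; rw [← hxa, ← h1])

lemma blocksAux_replicate (a : ι) (s : Bool) : ∀ (p : ℕ) (k : ℤ) (l : List (ι × Bool)),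
    blocksAux a k (List.replicate p (a,s) ++ l) = blocksAux a (k + p * sgn s) l := by
  intro p
  induction p with
  | zero => intro k l; simp
  | succ m ih =>
    intro k l
    rw [List.replicate_succ, List.cons_append, blocksAux, if_pos rfl, ih]
    congr 1
    push_cast
    ring

lemma natAbs_mul_sgn {k : ℤ} (hk : k ≠ 0) : (k.natAbs : ℤ) * sgn (decide (0 < k)) = k := by
  unfold sgn
  rcases lt_trichotomy 0 k with h | h | h
  · have hd : decide (0 < k) = true := decide_eq_true h
    rw [hd]
    simp [Int.natAbs_of_nonneg h.le]
  · omega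
  · have hd : decide (0 < k) = false := decide_eq_false (by omega)
    rw [hd]
    have : ((k.natAbs : ℤ)) = -k := Int.ofNat_natAbs_of_nonpos h.le
    rw [this]
    norm_num

lemma blocksAux_wordOf {B : List (ι × ℤ)} (hB : Valid B) (a : ι) (k : ℤ)
    (ha : ∀ p ∈ B.head?, p.1 ≠ a) :
    blocksAux a k (wordOf B) = (a, k) :: blocks (wordOf B) := by
  cases B with
  | nil => rfl
  | cons p B'
    =>
    obtain ⟨b, kb⟩ := p
    have hkb : kb ≠ 0 := hB.1 (b,kb) (by simp)
    have hba : b ≠ a := ha (b,kb) (by simp)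
    rw [wordOf, letters_cons hkb, List.cons_append, blocksAux, if_neg hba, blocks]

lemma blocks_wordOf {B : List (ι × ℤ)} (hB : Valid B) : blocks (wordOf B) = B := by
  induction B with
  | nil => rfl
  | cons p B ih =>
    obtain ⟨a, k⟩ := p
    have hk : k ≠ 0 := hB.1 (a,k) (by simp)
    have hBt : Valid B := ⟨fun q hq => hB.1 q (by simp [hq]), hB.2.tail⟩
    have ha : ∀ q ∈ B.head?, q.1 ≠ a := by
      cases B with
      | nil => simp
      | cons q B' =>
        intro r hr
        simp at hr
        subst hr
        exact ((List.isChain_cons_cons.mp hB.2).1).symm 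
    have hexp : sgn (decide (0 < k)) + ((k.natAbs - 1 : ℕ) : ℤ) * sgn (decide (0 < k)) = k := by
      have hpos : 1 ≤ k.natAbs := Int.natAbs_pos.mpr hk
      have h2 : ((k.natAbs - 1 : ℕ) : ℤ) = (k.natAbs : ℤ) - 1 := by omega
      rw [h2]
      linear_combination natAbs_mul_sgn hk
    rw [wordOf, letters_cons hk, List.cons_append, blocks, blocksAux_replicate, hexp,
        blocksAux_wordOf hBt a k ha, ih hBt]

lemma toWord_prodB {B : List (ι × ℤ)} (hB : Valid B) :
    (prodB B).toWord = wordOf B := by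
  rw [prodB_wordOf, FreeGroup.toWord_mk, reduce_eq_self (chain'_wordOf hB)]

lemma prodB_inj {B B' : List (ι × ℤ)} (hB : Valid B) (hB' : Valid B')
    (h : prodB B = prodB B') : B = B' := by
  have : wordOf B = wordOf B' := by
    rw [← toWord_prodB hB, ← toWord_prodB hB', h]
  rw [← blocks_wordOf hB, ← blocks_wordOf hB', this]

lemma Valid.tail {p : ι × ℤ} {B : List (ι × ℤ)} (h : Valid (p :: B)) : Valid B :=
  ⟨fun q hq => h.1 q (by simp [hq]), h.2.tail⟩

lemma valid_revNeg {B : List (ι × ℤ)} (hB : Valid B) : Valid (revNeg B) := by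
  constructor
  · intro p hp
    unfold revNeg at hp
    rw [List.mem_reverse, List.mem_map] at hp
    obtain ⟨q, hq, rfl⟩ := hp
    simpa using hB.1 q hq
  · unfold revNeg
    unfold List.Chain'; rw [List.isChain_reverse, List.isChain_map]
    exact List.IsChain.imp (fun a b h => by simpa [flip] using Ne.symm h) hB.2

lemma valid_blocksAux : ∀ (l : List (ι × Bool)) (a : ι) (s : Bool) (k : ℤ),
    ((a,s) :: l).Chain' Red2 → k ≠ 0 → (0 < k ↔ s = true) →
    Valid (blocksAux a k l) ∧ ∀ p ∈ (blocksAux a k l).head?, p.1 = a := by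
  intro l
  induction l with
  | nil =>
    intro a s k _ hk _
    unfold blocksAux
    exact ⟨⟨by simpa using hk, List.isChain_singleton _⟩, by simp⟩
  | cons x l ih =>
    obtain ⟨b, t⟩ := x
    intro a s k hch hk hks
    by_cases hba : b = a
    · subst hba
      have hts : t = s := by
        have h3 := (List.isChain_cons_cons.mp hch).1
        cases s <;> cases t <;> simp_all [Red2]
      subst hts
      have h1 : k + sgn t ≠ 0 := by
        unfold sgn
        cases t <;> simp_all <;> omega
      have h2 : 0 < k + sgn t ↔ t = true := by
        unfold sgn
        cases t <;> simp_all <;> omega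
      rw [blocksAux, if_pos rfl]
      exact ih b t (k + sgn t) (List.isChain_cons_cons.mp hch).2 h1 h2
    · rw [blocksAux, if_neg hba]
      have hsg : sgn t ≠ 0 := by unfold sgn; cases t <;> simp
      have hsg2 : 0 < sgn t ↔ t = true := by unfold sgn; cases t <;> simp
      obtain ⟨hV, hhd⟩ := ih b t (sgn t) (List.isChain_cons_cons.mp hch).2 hsg hsg2
      refine ⟨⟨?_, ?_⟩, by simp⟩
      · intro p hp
        rcases List.mem_cons.mp hp with rfl | hp
        · exact hk
        · exact hV.1 p hp
      · unfold List.Chain'; rw [List.isChain_cons]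
        refine ⟨?_, hV.2⟩
        intro y hy
        have := hhd y hy
        simp only []
        rw [this]
        exact fun h => hba h.symm

lemma valid_blocks {w : List (ι × Bool)} (hw : w.Chain' Red2) : Valid (blocks w) := by
  cases w with
  | nil => exact ⟨by simp [blocks], List.isChain_nil⟩
  | cons x l =>
    obtain ⟨a, s⟩ := x
    have hsg : sgn s ≠ 0 := by unfold sgn; cases s <;> simp
    have hsg2 : 0 < sgn s ↔ s = true := by unfold sgn; cases s <;> simp
    exact (valid_blocksAux l a s (sgn s) hw hsg hsg2).1

lemma valid_blocks_toWord (g : FreeGroup ι) : Valid (blocks (FreeGroup.toWord g)) :=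
  valid_blocks (chain'_toWord g)

lemma blockSqSumAux_eq : ∀ (l : List (ι × Bool)) (a : ι) (s : Bool) (n : ℕ),
    ((a,s) :: l).Chain' Red2 →
    blockSqSumAux a n l = sumSq (blocksAux a ((n : ℤ) * sgn s) l) := by
  intro l
  induction l with
  | nil =>
    intro a s n _
    unfold blockSqSumAux blocksAux sumSq
    simp [Int.natAbs_mul]
    cases s <;> simp [sgn] <;> ring
  | cons x l ih =>
    obtain ⟨b, t⟩ := x
    intro a s n hch
    by_cases hba : b = a
    · subst hba
      have hts : t = s := by
        have h3 := (List.isChain_cons_cons.mp hch).1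
        cases s <;> cases t <;> simp_all [Red2]
      subst hts
      rw [blockSqSumAux, if_pos rfl, blocksAux, if_pos rfl,
          ih b t (n+1) (List.isChain_cons_cons.mp hch).2]
      congr 2
      push_cast
      ring
    · rw [blockSqSumAux, if_neg hba, blocksAux, if_neg hba,
          ih b t 1 (List.isChain_cons_cons.mp hch).2]
      unfold sumSq
      simp [Int.natAbs_mul]
      cases s <;> simp [sgn] <;> ring

lemma l2sq_eq_sumSq (g : FreeGroup ι) : l2sq g = sumSq (blocks (FreeGroup.toWord g)) := by
  unfold l2sq
  cases hw : FreeGroup.toWord g with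
  | nil => simp [blocks, sumSq]
  | cons x l =>
    obtain ⟨a, s⟩ := x
    have hch : ((a,s) :: l).Chain' Red2 := hw ▸ chain'_toWord g
    change blockSqSumAux a 1 l = _
    rw [blocks, blockSqSumAux_eq l a s 1 hch]
    norm_num

def diffSq : List (ι × ℤ) → List (ι × ℤ) → ℕ
  | [], G => sumSq G
  | p :: F, [] => sumSq (p :: F)
  | (a,j) :: F, (b,k) :: G =>
    if a = b then
      if j = k then diffSq F G
      else sumSq F + (k-j).natAbs ^ 2 + sumSq G
    else sumSq ((a,j) :: F) + sumSq ((b,k) :: G)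

lemma sumSq_blocks_toWord_prodB {B : List (ι × ℤ)} (hB : Valid B) :
    sumSq (blocks (FreeGroup.toWord (prodB B))) = sumSq B := by
  rw [toWord_prodB hB, blocks_wordOf hB]

lemma head_fst_ne {a : ι} {j : ℤ} {F : List (ι × ℤ)} (h : Valid ((a,j) :: F)) :
    ∀ p ∈ F.head?, p.1 ≠ a := by
  cases F with
  | nil => simp
  | cons q F' =>
    intro p hp
    simp at hp
    subst hp
    exact ((List.isChain_cons_cons.mp h.2).1).symm

lemma valid_middle {a : ι} {j k : ℤ} {F G : List (ι × ℤ)}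
    (hF : Valid ((a,j) :: F)) (hG : Valid ((a,k) :: G)) {m : ℤ} (hm : m ≠ 0) :
    Valid (revNeg F ++ (a, m) :: G) := by
  have hFt := hF.tail
  have hGt := hG.tail
  constructor
  · intro p hp
    rcases List.mem_append.mp hp with hp | hp
    · exact (valid_revNeg hFt).1 p hp
    · rcases List.mem_cons.mp hp with rfl | hp
      · exact hm
      · exact hGt.1 p hp
  · unfold List.Chain'; rw [List.isChain_append]
    refine ⟨(valid_revNeg hFt).2, ?_, ?_⟩
    · rw [List.isChain_cons]
      refine ⟨?_, hGt.2⟩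
      intro y hy
      exact fun h => (head_fst_ne hG y hy) h.symm
    · intro x hx y hy
      simp at hy
      subst hy
      unfold revNeg at hx
      rw [List.getLast?_reverse, List.head?_map] at hx
      cases hh : F.head? with
      | none => rw [hh] at hx; simp at hx
      | some q =>
        rw [hh] at hx
        simp at hx
        subst hx
        simpa using head_fst_ne hF q (by rw [hh]; rfl)

lemma valid_append_revNeg {a b : ι} {j k : ℤ} {F G : List (ι × ℤ)}
    (hF : Valid ((a,j) :: F)) (hG : Valid ((b,k) :: G)) (hab : a ≠ b) :
    Valid (revNeg ((a,j) :: F) ++ (b,k) :: G) := by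
  constructor
  · intro p hp
    rcases List.mem_append.mp hp with hp | hp
    · exact (valid_revNeg hF).1 p hp
    · exact hG.1 p hp
  · unfold List.Chain'; rw [List.isChain_append]
    refine ⟨(valid_revNeg hF).2, hG.2, ?_⟩
    intro x hx y hy
    simp at hy
    subst hy
    unfold revNeg at hx
    rw [List.getLast?_reverse, List.head?_map] at hx
    simp at hx
    subst hx
    simpa using hab

lemma key_sumSq : ∀ (Bf Bg : List (ι × ℤ)), Valid Bf → Valid Bg →
    sumSq (blocks (FreeGroup.toWord ((prodB Bf)⁻¹ * prodB Bg))) = diffSq Bf Bg := by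
  intro Bf
  induction Bf with
  | nil =>
    intro Bg _ hG
    rw [diffSq]
    simp [prodB]
    exact sumSq_blocks_toWord_prodB hG
  | cons p F ih =>
    obtain ⟨a, j⟩ := p
    intro Bg hF hG
    cases Bg with
    | nil =>
      rw [diffSq]
      have : (prodB ((a,j) :: F))⁻¹ * prodB [] = prodB (revNeg ((a,j) :: F)) := by
        rw [prodB_revNeg]; simp [prodB]
      rw [this, sumSq_blocks_toWord_prodB (valid_revNeg hF), sumSq_revNeg]
    | cons q G =>
      obtain ⟨b, k⟩ := q
      by_cases hab : a = b
      · subst hab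
        by_cases hjk : j = k
        · subst hjk
          have : (prodB ((a,j) :: F))⁻¹ * prodB ((a,j) :: G)
              = (prodB F)⁻¹ * prodB G := by
            rw [prodB, prodB]; group
          rw [this, ih G hF.tail hG.tail, diffSq]
          simp
        · have hm : k - j ≠ 0 := sub_ne_zero.mpr (Ne.symm hjk)
          have hval := valid_middle hF hG hm
          have : (prodB ((a,j) :: F))⁻¹ * prodB ((a,k) :: G)
              = prodB (revNeg F ++ (a, k - j) :: G) := by
            rw [prodB_append, prodB_revNeg, prodB, prodB, prodB]
            group
          rw [this, sumSq_blocks_toWord_prodB hval, diffSq, if_pos rfl, if_neg hjk,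
              sumSq_append, sumSq_revNeg, sumSq]
          simp [sumSq]
          ring
      · have hval := valid_append_revNeg hF hG hab
        have : (prodB ((a,j) :: F))⁻¹ * prodB ((b,k) :: G)
            = prodB (revNeg ((a,j) :: F) ++ (b,k) :: G) := by
          rw [prodB_append, prodB_revNeg]
        rw [this, sumSq_blocks_toWord_prodB hval, diffSq, if_neg hab,
            sumSq_append, sumSq_revNeg]

noncomputable def U (pre : FreeGroup ι) : List (ι × ℤ) → lp (fun _ : FreeGroup ι => ℝ) 2
  | [] => 0
  | (a, k) :: B => (k : ℝ) • lp.single 2 (pre * FreeGroup.of a) 1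
      + U (pre * FreeGroup.of a ^ k) B

noncomputable def els (L : List (FreeGroup ι × ℝ)) : lp (fun _ : FreeGroup ι => ℝ) 2 :=
  (L.map fun p => p.2 • lp.single 2 p.1 (1 : ℝ)).sum

def ptsL (pre : FreeGroup ι) : List (ι × ℤ) → List (FreeGroup ι × ℝ)
  | [] => []
  | (a, k) :: B => (pre * FreeGroup.of a, (k : ℝ)) :: ptsL (pre * FreeGroup.of a ^ k) B

def negL (L : List (FreeGroup ι × ℝ)) : List (FreeGroup ι × ℝ) := L.map (fun p => (p.1, -p.2))

lemma els_nil : els ([] : List (FreeGroup ι × ℝ)) = 0 := rfl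

lemma els_cons (p : FreeGroup ι × ℝ) (L : List (FreeGroup ι × ℝ)) :
    els (p :: L) = p.2 • lp.single 2 p.1 (1:ℝ) + els L := by
  simp [els]

lemma els_append (L₁ L₂ : List (FreeGroup ι × ℝ)) : els (L₁ ++ L₂) = els L₁ + els L₂ := by
  simp [els]

lemma els_negL (L : List (FreeGroup ι × ℝ)) : els (negL L) = - els L := by
  induction L with
  | nil => simp [negL, els_nil]
  | cons p L ih =>
    have : negL (p :: L) = (p.1, -p.2) :: negL L := rfl
    rw [this, els_cons, els_cons, ih]
    simp [neg_smul]
    abel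

lemma U_eq_els : ∀ (B : List (ι × ℤ)) (pre : FreeGroup ι), U pre B = els (ptsL pre B) := by
  intro B
  induction B with
  | nil => intro pre; rfl
  | cons p B ih =>
    obtain ⟨a, k⟩ := p
    intro pre
    rw [U, ptsL, els_cons, ih]

lemma TAux_eq (l : List (ι × Bool)) : ∀ (pre : FreeGroup ι) (a : ι) (k : ℤ),
    TAux pre a k l = U pre (blocksAux a k l) := by
  induction l with
  | nil =>
    intro pre a k
    show (k : ℝ) • lp.single 2 (pre * FreeGroup.of a) 1 = _
    rw [blocksAux, U, U]
    abel
  | cons x l ih =>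
    obtain ⟨b, s⟩ := x
    intro pre a k
    rw [TAux]
    by_cases hba : b = a
    · subst hba
      rw [if_pos rfl, blocksAux, if_pos rfl, ih]
      rfl
    · rw [if_neg hba, blocksAux, if_neg hba, U, ih]
      rfl

lemma T_eq (g : FreeGroup ι) : T g = U 1 (blocks (FreeGroup.toWord g)) := by
  unfold T
  cases hw : FreeGroup.toWord g with
  | nil => rfl
  | cons x l =>
    obtain ⟨a, s⟩ := x
    show TAux 1 a (if s then 1 else -1) l = _
    rw [blocks, TAux_eq]
    rfl

lemma els_apply_eq_zero {L : List (FreeGroup ι × ℝ)} {x : FreeGroup ι}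
    (hx : x ∉ L.map Prod.fst) : (els L : ∀ _ : FreeGroup ι, ℝ) x = 0 := by
  induction L with
  | nil => rw [els_nil]; rfl
  | cons p L ih =>
    obtain ⟨y, c⟩ := p
    have hxy : x ≠ y := by
      intro h; exact hx (by simp [h])
    have hxL : x ∉ L.map Prod.fst := by
      intro h; exact hx (by simp; right; simpa using h)
    rw [els_cons, lp.coeFn_add, Pi.add_apply, ih hxL, lp.coeFn_smul, Pi.smul_apply,
        lp.single_apply_ne 2 y _ hxy]
    simp

lemma norm_single_one (x : FreeGroup ι) :
    ‖(lp.single 2 x (1:ℝ) : lp (fun _ : FreeGroup ι => ℝ) 2)‖ = 1 := by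
  have h := lp.norm_single (p := (2:ℝ≥0∞)) (E := fun _ : FreeGroup ι => ℝ)
      (hp := by norm_num) (i := x) (x := (1:ℝ))
  simpa using h

lemma norm_els_sq : ∀ (L : List (FreeGroup ι × ℝ)), (L.map Prod.fst).Nodup →
    ‖els L‖^2 = (L.map fun p => p.2^2).sum := by
  intro L
  induction L with
  | nil => intro _; simp [els_nil]
  | cons p L ih =>
    obtain ⟨x, c⟩ := p
    intro h
    rw [List.map_cons, List.nodup_cons] at h
    obtain ⟨hx, hL⟩ := h
    rw [els_cons]
    have hinner : (inner ℝ (c • lp.single 2 x (1:ℝ)) (els L) : ℝ) = 0 := by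
      rw [real_inner_smul_left, lp.inner_single_left]
      have := els_apply_eq_zero hx
      simp [RCLike.inner_apply, this]
    rw [norm_add_sq_real, hinner, ih hL, norm_smul, norm_single_one, mul_one,
        List.map_cons, List.sum_cons, Real.norm_eq_abs, sq_abs]
    ring

def preR : List (ι × ℤ) → List (List (ι × ℤ))
  | [] => []
  | (a, k) :: B => [(a, 1)] :: (preR B).map ((a, k) :: ·)

lemma ptsL_fst : ∀ (B : List (ι × ℤ)) (pre : FreeGroup ι),
    (ptsL pre B).map Prod.fst = (preR B).map (fun R => pre * prodB R) := by
  intro B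
  induction B with
  | nil => intro pre; rfl
  | cons p B ih =>
    obtain ⟨a, k⟩ := p
    intro pre
    rw [ptsL, preR, List.map_cons, List.map_cons, ih, List.map_map]
    have h1 : pre * FreeGroup.of a = pre * prodB [(a,(1:ℤ))] := by simp [prodB]
    rw [h1]
    congr 1
    apply List.map_congr_left
    intro R _
    simp [prodB, mul_assoc]

lemma ptsL_sq : ∀ (B : List (ι × ℤ)) (pre : FreeGroup ι),
    ((ptsL pre B).map fun p => p.2^2).sum = (sumSq B : ℝ) := by
  intro B
  induction B with
  | nil => intro pre; simp [ptsL, sumSq]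
  | cons p B ih =>
    obtain ⟨a, k⟩ := p
    intro pre
    have hss : sumSq ((a,k) :: B) = k.natAbs^2 + sumSq B := by simp [sumSq]
    rw [ptsL, List.map_cons, List.sum_cons, ih, hss]
    push_cast [Nat.cast_natAbs]
    rw [sq_abs]

lemma negL_fst (L : List (FreeGroup ι × ℝ)) : (negL L).map Prod.fst = L.map Prod.fst := by
  simp [negL]

lemma negL_sq (L : List (FreeGroup ι × ℝ)) :
    ((negL L).map fun p => p.2^2) = (L.map fun p => p.2^2) := by
  unfold negL
  rw [List.map_map]
  apply List.map_congr_left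
  intro p _
  simp

lemma preR_ne_nil : ∀ {B : List (ι × ℤ)} {R}, R ∈ preR B → R ≠ [] := by
  intro B
  induction B with
  | nil => intro R hR; simp [preR] at hR
  | cons p B ih =>
    obtain ⟨a, k⟩ := p
    intro R hR
    rw [preR] at hR
    rcases List.mem_cons.mp hR with rfl | hR
    · simp
    · obtain ⟨R', _, rfl⟩ := List.mem_map.mp hR
      simp

lemma preR_headgen {a : ι} {m : ℤ} {B : List (ι × ℤ)} :
    ∀ R ∈ preR ((a,m) :: B), (R.map Prod.fst).head? = some a := by
  intro R hR
  rw [preR] at hR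
  rcases List.mem_cons.mp hR with rfl | hR
  · rfl
  · obtain ⟨R', _, rfl⟩ := List.mem_map.mp hR
    rfl

lemma preR_valid : ∀ {B : List (ι × ℤ)}, Valid B → ∀ R ∈ preR B, Valid R := by
  intro B
  induction B with
  | nil => intro _ R hR; simp [preR] at hR
  | cons p B ih =>
    obtain ⟨a, k⟩ := p
    intro hB R hR
    rw [preR] at hR
    rcases List.mem_cons.mp hR with rfl | hR
    · exact ⟨by simp, List.isChain_singleton _⟩
    · obtain ⟨R', hR', rfl⟩ := List.mem_map.mp hR
      have hval : Valid R' := ih hB.tail R' hR'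
      refine ⟨?_, ?_⟩
      · intro q hq
        rcases List.mem_cons.mp hq with rfl | hq
        · exact hB.1 (a,k) (by simp)
        · exact hval.1 q hq
      · unfold List.Chain'; rw [List.isChain_cons]
        refine ⟨?_, hval.2⟩
        intro y hy
        cases B with
        | nil => simp [preR] at hR'
        | cons c B' =>
          obtain ⟨cc, mc⟩ := c
          have hhead := preR_headgen R' hR'
          have hya : y.1 = cc := by
            cases hRh : R'.head? with
            | none => rw [hRh] at hy; simp at hy
            | some z =>
              rw [hRh] at hy
              simp at hy
              subst hy
              rw [List.head?_map, hRh] at hhead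
              simpa using hhead
          show (a,k).1 ≠ y.1
          rw [hya]
          exact (List.isChain_cons_cons.mp hB.2).1

lemma preR_cons_valid {a : ι} {j : ℤ} {B : List (ι × ℤ)} (hB : Valid ((a,j) :: B))
    (m : ℤ) (hm : m ≠ 0) : ∀ R ∈ preR B, Valid ((a,m) :: R) := by
  cases B with
  | nil => intro R hR; simp [preR] at hR
  | cons c B' =>
    intro R hR
    obtain ⟨cc, mc⟩ := c
    have hval : Valid R := preR_valid hB.tail R hR
    have hhead := preR_headgen R hR
    refine ⟨?_, ?_⟩
    · intro q hq
      rcases List.mem_cons.mp hq with rfl | hq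
      · exact hm
      · exact hval.1 q hq
    · unfold List.Chain'; rw [List.isChain_cons]
      refine ⟨?_, hval.2⟩
      intro y hy
      have hya : y.1 = cc := by
        cases hRh : R.head? with
        | none => rw [hRh] at hy; simp at hy
        | some z =>
          rw [hRh] at hy
          simp at hy
          subst hy
          rw [List.head?_map, hRh] at hhead
          simpa using hhead
      show (a,m).1 ≠ y.1
      rw [hya]
      exact (List.isChain_cons_cons.mp hB.2).1

lemma preR_nodup : ∀ (B : List (ι × ℤ)), (preR B).Nodup := by
  intro B
  induction B with
  | nil => simp [preR]
  | cons p B ih =>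
    obtain ⟨a, k⟩ := p
    rw [preR, List.nodup_cons]
    constructor
    · intro hmem
      obtain ⟨R', hR', heq⟩ := List.mem_map.mp hmem
      have h2 : R' = [] := by
        have := congrArg List.length heq
        simpa using this
      exact preR_ne_nil hR' h2
    · exact List.Nodup.map List.cons_injective ih

lemma prodB_single (a : ι) : prodB [(a, (1:ℤ))] = FreeGroup.of a := by
  simp [prodB]

lemma valid_single (a : ι) : Valid [(a, (1:ℤ))] := ⟨by simp, List.isChain_singleton _⟩

lemma mul_prodB_cons (pre : FreeGroup ι) (a : ι) (k : ℤ) (R : List (ι × ℤ)) :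
    pre * FreeGroup.of a ^ k * prodB R = pre * prodB ((a,k) :: R) := by
  rw [prodB, mul_assoc]

lemma nodup_pts (pre : FreeGroup ι) {B : List (ι × ℤ)} (hB : Valid B) :
    ((ptsL pre B).map Prod.fst).Nodup := by
  rw [ptsL_fst]
  refine List.Nodup.map_on ?_ (preR_nodup B)
  intro R hR S hS h
  exact prodB_inj (preR_valid hB R hR) (preR_valid hB S hS) (mul_left_cancel h)

lemma preR_mem_shape {a : ι} {m : ℤ} {B : List (ι × ℤ)} :
    ∀ R ∈ preR ((a,m) :: B), R = [(a,1)] ∨ ∃ R' ∈ preR B, R = (a,m) :: R' := by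
  intro R hR
  rw [preR] at hR
  rcases List.mem_cons.mp hR with rfl | hR
  · exact Or.inl rfl
  · obtain ⟨R', hR', rfl⟩ := List.mem_map.mp hR
    exact Or.inr ⟨R', hR', rfl⟩

lemma key_norm : ∀ (Bf Bg : List (ι × ℤ)) (pre : FreeGroup ι), Valid Bf → Valid Bg →
    ‖U pre Bg - U pre Bf‖^2 = (diffSq Bf Bg : ℝ) := by
  intro Bf
  induction Bf with
  | nil =>
    intro Bg pre _ hG
    have h0 : U pre ([] : List (ι × ℤ)) = 0 := rfl
    rw [h0, sub_zero, U_eq_els, norm_els_sq _ (nodup_pts pre hG), ptsL_sq, diffSq]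
  | cons p F ih =>
    obtain ⟨a, j⟩ := p
    intro Bg pre hF hG
    cases Bg with
    | nil =>
      have h0 : U pre ([] : List (ι × ℤ)) = 0 := rfl
      rw [h0, zero_sub, norm_neg, U_eq_els, norm_els_sq _ (nodup_pts pre hF), ptsL_sq, diffSq]
    | cons q G =>
      obtain ⟨b, k⟩ := q
      by_cases hab : a = b
      · subst hab
        by_cases hjk : j = k
        · subst hjk
          have hU : U pre ((a,j)::G) - U pre ((a,j)::F)
              = U (pre * FreeGroup.of a ^ j) G - U (pre * FreeGroup.of a ^ j) F := by
            rw [U, U]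
            abel
          have hd : diffSq ((a,j)::F) ((a,j)::G) = diffSq F G := by
            simp [diffSq]
          rw [hU, hd, ih G _ hF.tail hG.tail]
        · -- same generator, different exponents
          have hd : diffSq ((a,j)::F) ((a,k)::G)
              = sumSq F + (k-j).natAbs ^ 2 + sumSq G := by
            simp [diffSq, hjk]
          have hU : U pre ((a,k)::G) - U pre ((a,j)::F)
              = els ((pre * FreeGroup.of a, ((k:ℝ) - (j:ℝ))) ::
                  (ptsL (pre * FreeGroup.of a ^ k) G ++ negL (ptsL (pre * FreeGroup.of a ^ j) F))) := by
            rw [els_cons, els_append, els_negL, ← U_eq_els, ← U_eq_els, U, U]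
            simp only [sub_smul]
            abel
          -- validity of extended prefixes
          have hGv : ∀ R ∈ preR G, Valid ((a,k) :: R) :=
            preR_cons_valid hG k (hG.1 (a,k) (by simp))
          have hFv : ∀ R ∈ preR F, Valid ((a,j) :: R) :=
            preR_cons_valid hF j (hF.1 (a,j) (by simp))
          have hnodup : (((pre * FreeGroup.of a, ((k:ℝ)-(j:ℝ))) ::
              (ptsL (pre * FreeGroup.of a ^ k) G ++ negL (ptsL (pre * FreeGroup.of a ^ j) F))).map
                Prod.fst).Nodup := by
            rw [List.map_cons, List.map_append, negL_fst, ptsL_fst, ptsL_fst,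
                List.nodup_cons, List.nodup_append]
            refine ⟨?_, ?_, ?_, ?_⟩
            · -- head not among the rest
              intro hmem
              have main : ∀ (m : ℤ) (B' : List (ι × ℤ)),
                  (∀ R ∈ preR B', Valid ((a,m) :: R)) →
                  pre * FreeGroup.of a ∈
                    (preR B').map (fun R => pre * FreeGroup.of a ^ m * prodB R) → False := by
                intro m B' hv hmem'
                obtain ⟨R, hR, heq⟩ := List.mem_map.mp hmem'
                rw [mul_prodB_cons] at heq
                have h2 : pre * prodB [(a,(1:ℤ))] = pre * FreeGroup.of a := by
                  simp [prodB]
                rw [← h2] at heq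
                have h3 := prodB_inj (hv R hR) (valid_single a) (mul_left_cancel heq)
                have h4 := congrArg List.length h3
                simp at h4
                exact preR_ne_nil hR h4
              rcases List.mem_append.mp hmem with hmem | hmem
              · exact main k G hGv hmem
              · exact main j F hFv hmem
            · -- G part nodup
              refine List.Nodup.map_on ?_ (preR_nodup G)
              intro R hR S hS h
              rw [mul_prodB_cons, mul_prodB_cons] at h
              have := prodB_inj (hGv R hR) (hGv S hS) (mul_left_cancel h)
              exact List.cons_injective this
            · -- F part nodup
              refine List.Nodup.map_on ?_ (preR_nodup F)
              intro R hR S hS h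
              rw [mul_prodB_cons, mul_prodB_cons] at h
              have := prodB_inj (hFv R hR) (hFv S hS) (mul_left_cancel h)
              exact List.cons_injective this
            · -- disjoint
              intro x hxG y hxF hxy
              subst hxy
              obtain ⟨R, hR, heqR⟩ := List.mem_map.mp hxG
              obtain ⟨S, hS, heqS⟩ := List.mem_map.mp hxF
              rw [mul_prodB_cons] at heqR heqS
              rw [← heqS] at heqR
              have := prodB_inj (hGv R hR) (hFv S hS) (mul_left_cancel heqR)
              have hkj : k = j := by
                have := (List.cons.injEq _ _ _ _).mp this
                exact (Prod.mk.injEq _ _ _ _).mp this.1 |>.2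
              exact hjk hkj.symm
          rw [hU, norm_els_sq _ hnodup, hd]
          rw [List.map_cons, List.sum_cons, List.map_append, List.sum_append,
              negL_sq, ptsL_sq, ptsL_sq]
          push_cast [Nat.cast_natAbs]
          rw [sq_abs]
          ring
      · -- different generators
        have hd : diffSq ((a,j)::F) ((b,k)::G)
            = sumSq ((a,j)::F) + sumSq ((b,k)::G) := by
          simp [diffSq, hab]
        have hU : U pre ((b,k)::G) - U pre ((a,j)::F)
            = els (ptsL pre ((b,k)::G) ++ negL (ptsL pre ((a,j)::F))) := by
          rw [els_append, els_negL, ← U_eq_els, ← U_eq_els, sub_eq_add_neg]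
        have hnodup : ((ptsL pre ((b,k)::G) ++ negL (ptsL pre ((a,j)::F))).map
            Prod.fst).Nodup := by
          rw [List.map_append, negL_fst, List.nodup_append]
          refine ⟨nodup_pts pre hG, nodup_pts pre hF, ?_⟩
          intro x hxG y hxF hxy
          subst hxy
          rw [ptsL_fst] at hxG hxF
          obtain ⟨R, hR, heqR⟩ := List.mem_map.mp hxG
          obtain ⟨S, hS, heqS⟩ := List.mem_map.mp hxF
          rw [← heqS] at heqR
          have hRS := prodB_inj (preR_valid hG R hR) (preR_valid hF S hS)
            (mul_left_cancel heqR)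
          have h1 := preR_headgen R hR
          have h2 := preR_headgen S hS
          rw [hRS] at h1
          rw [h1] at h2
          simp at h2
          exact hab h2.symm
        rw [hU, norm_els_sq _ hnodup, hd]
        rw [List.map_append, List.sum_append, negL_sq, ptsL_sq, ptsL_sq]
        push_cast
        ring

end NTSq

/-- For all `f, g ∈ F_r`, `‖T(g) − T(f)‖² = ‖f⁻¹ g‖₂²`. -/
theorem norm_T_sub_T_sq
    {ι : Type*} [DecidableEq ι] [Countable ι] [Nonempty ι]
    (f g : FreeGroup ι) :
    ‖T g - T f‖ ^ 2 = (l2sq (f⁻¹ * g) : ℝ) := by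
  classical
  set Bf := NTSq.blocks (FreeGroup.toWord f) with hBf
  set Bg := NTSq.blocks (FreeGroup.toWord g) with hBg
  have hvf : NTSq.Valid Bf := NTSq.valid_blocks_toWord f
  have hvg : NTSq.Valid Bg := NTSq.valid_blocks_toWord g
  have hpf : NTSq.prodB Bf = f := by rw [hBf, NTSq.prodB_blocks, FreeGroup.mk_toWord]
  have hpg : NTSq.prodB Bg = g := by rw [hBg, NTSq.prodB_blocks, FreeGroup.mk_toWord]
  have hl : l2sq (f⁻¹ * g) = NTSq.diffSq Bf Bg := by
    rw [NTSq.l2sq_eq_sumSq, ← hpf, ← hpg, NTSq.key_sumSq Bf Bg hvf hvg]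
  rw [NTSq.T_eq g, NTSq.T_eq f, NTSq.key_norm Bf Bg 1 hvf hvg, hl]
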